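/- Let C be a monoidal category and G a 2-group (a monoidal groupoid in which every object has a weak inverse). If F : C → G is a functor equipped with natural isomorphisms F_⊗(x,y) : Fx ⊗' Fy → F(x ⊗ y) satisfying the hexagon compatibility with the associators (axiom SF1), then there exists a unique isomorphism F_1 : 1' → F1 such that (F, F_⊗, F_1) is a monoidal functor (i.e. satisfies the two unit axioms SF3). -/

import Mathlib

open CategoryTheory MonoidalCategory

private lemma whiskerRight_bij {G : Type*} [Category G] [MonoidalCategory G]
    {E Y : G} (P : E ⊗ Y ≅ 𝟙_ G) (Q : Y ⊗ E ≅ 𝟙_ G) {A B : G}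
    (h : A ⊗ E ⟶ B ⊗ E) : ∃! f : A ⟶ B, f ▷ E = h := by
  let η : tensorRight E ⋙ tensorRight Y ≅ 𝟭 G :=
    (tensorRightTensor E Y).symm ≪≫ (curriedTensor G).flip.mapIso P ≪≫ rightUnitorNatIso G
  let ε : tensorRight Y ⋙ tensorRight E ≅ 𝟭 G :=
    (tensorRightTensor Y E).symm ≪≫ (curriedTensor G).flip.mapIso Q ≪≫ rightUnitorNatIso G
  haveI : (tensorRight Y : G ⥤ G).Faithful := Functor.Faithful.of_comp_iso ε
  haveI : (tensorRight E : G ⥤ G).Faithful := Functor.Faithful.of_comp_iso η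
  haveI : Functor.Full (tensorRight E ⋙ tensorRight Y) := Functor.Full.of_iso η.symm
  haveI : (tensorRight E : G ⥤ G).Full :=
    Functor.Full.of_comp_faithful (tensorRight E) (tensorRight Y)
  obtain ⟨f, hf⟩ := (tensorRight E).map_surjective h
  refine ⟨f, by simpa using hf, fun g hg => (tensorRight E).map_injective ?_⟩
  change g ▷ E = (tensorRight E).map f
  rw [hg]
  simpa using hf.symm

/-- Let `C` be a monoidal category and `G` a 2-group (a monoidal groupoid in which every
object has a weak inverse).  If `F : C ⥤ G` is equipped with natural isomorphisms
`Fm x y : F.obj x ⊗ F.obj y ⟶ F.obj (x ⊗ y)` satisfying the associativity axiom (SF1),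
then there is a unique isomorphism `F₁ : 𝟙_ G ⟶ F.obj (𝟙_ C)` satisfying the two unit
axioms (SF3), i.e. making `(F, Fm, F₁)` a monoidal functor. -/
theorem stmt1 {C G : Type*} [Category C] [MonoidalCategory C]
    [Groupoid G] [MonoidalCategory G]
    (hinv : ∀ x : G, ∃ y : G, Nonempty (x ⊗ y ≅ 𝟙_ G) ∧ Nonempty (y ⊗ x ≅ 𝟙_ G))
    (F : C ⥤ G) (Fm : ∀ x y : C, F.obj x ⊗ F.obj y ⟶ F.obj (x ⊗ y))
    (hiso : ∀ x y : C, IsIso (Fm x y))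
    (hnat : ∀ {x x' y y' : C} (f : x ⟶ x') (g : y ⟶ y'),
      (F.map f ⊗ₘ F.map g) ≫ Fm x' y' = Fm x y ≫ F.map (f ⊗ₘ g))
    (hSF1 : ∀ x y z : C,
      (Fm x y ▷ F.obj z) ≫ Fm (x ⊗ y) z ≫ F.map (α_ x y z).hom =
        (α_ (F.obj x) (F.obj y) (F.obj z)).hom ≫ (F.obj x ◁ Fm y z) ≫ Fm x (y ⊗ z)) :
    ∃! F₁ : 𝟙_ G ⟶ F.obj (𝟙_ C), IsIso F₁ ∧
      (∀ x : C, (F₁ ▷ F.obj x) ≫ Fm (𝟙_ C) x ≫ F.map (λ_ x).hom = (λ_ (F.obj x)).hom) ∧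
      (∀ x : C, (F.obj x ◁ F₁) ≫ Fm x (𝟙_ C) ≫ F.map (ρ_ x).hom = (ρ_ (F.obj x)).hom) := by
  obtain ⟨y, ⟨p⟩, ⟨q⟩⟩ := hinv (F.obj (𝟙_ C))
  -- derived naturality in each variable
  have hnatR : ∀ {x x' : C} (f : x ⟶ x') (z : C),
      (F.map f ▷ F.obj z) ≫ Fm x' z = Fm x z ≫ F.map (f ▷ z) := by
    intro x x' f z
    simpa using hnat f (𝟙 z)
  have hnatL : ∀ (z : C) {x x' : C} (f : x ⟶ x'),
      (F.obj z ◁ F.map f) ≫ Fm z x' = Fm z x ≫ F.map (z ◁ f) := by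
    intro z x x' f
    simpa using hnat (𝟙 z) f
  -- cancellation of right whiskering by F.obj (𝟙_ C)
  have cancelE : ∀ {A B : G} (f g : A ⟶ B),
      f ▷ F.obj (𝟙_ C) = g ▷ F.obj (𝟙_ C) → f = g := by
    intro A B f g hfg
    obtain ⟨w, -, hwu⟩ := whiskerRight_bij p q (g ▷ F.obj (𝟙_ C))
    rw [hwu f hfg, hwu g rfl]
  -- associativity of the "multiplication"
  have assocN : ∀ x : C,
      ((Fm (𝟙_ C) (𝟙_ C) ≫ F.map (λ_ (𝟙_ C)).hom) ▷ F.obj x) ≫ Fm (𝟙_ C) x ≫ F.map (λ_ x).hom =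
        (α_ (F.obj (𝟙_ C)) (F.obj (𝟙_ C)) (F.obj x)).hom ≫
          (F.obj (𝟙_ C) ◁ (Fm (𝟙_ C) x ≫ F.map (λ_ x).hom)) ≫ Fm (𝟙_ C) x ≫ F.map (λ_ x).hom := by
    intro x
    have hc : (λ_ (𝟙_ C)).hom ▷ x ≫ (λ_ x).hom =
        (α_ (𝟙_ C) (𝟙_ C) x).hom ≫ (𝟙_ C ◁ (λ_ x).hom) ≫ (λ_ x).hom := by
      rw [leftUnitor_whiskerRight, Category.assoc, leftUnitor_naturality]
    rw [comp_whiskerRight, Category.assoc]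
    slice_lhs 2 3 => rw [hnatR (λ_ (𝟙_ C)).hom x]
    slice_lhs 3 4 => rw [← F.map_comp, hc, F.map_comp, F.map_comp]
    slice_lhs 1 3 => rw [hSF1 (𝟙_ C) (𝟙_ C) x]
    slice_lhs 3 4 => rw [← hnatL (𝟙_ C) (λ_ x).hom]
    simp only [MonoidalCategory.whiskerLeft_comp, Category.assoc]
  -- mirror associativity
  have assocN' : ∀ x : C,
      ((Fm x (𝟙_ C) ≫ F.map (ρ_ x).hom) ▷ F.obj (𝟙_ C)) ≫ Fm x (𝟙_ C) ≫ F.map (ρ_ x).hom =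
        (α_ (F.obj x) (F.obj (𝟙_ C)) (F.obj (𝟙_ C))).hom ≫
          (F.obj x ◁ (Fm (𝟙_ C) (𝟙_ C) ≫ F.map (λ_ (𝟙_ C)).hom)) ≫
            Fm x (𝟙_ C) ≫ F.map (ρ_ x).hom := by
    intro x
    have hc : (ρ_ x).hom ▷ 𝟙_ C ≫ (ρ_ x).hom =
        (α_ x (𝟙_ C) (𝟙_ C)).hom ≫ (x ◁ (λ_ (𝟙_ C)).hom) ≫ (ρ_ x).hom := by
      rw [← triangle, Category.assoc]
    rw [comp_whiskerRight, Category.assoc]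
    slice_lhs 2 3 => rw [hnatR (ρ_ x).hom (𝟙_ C)]
    slice_lhs 3 4 => rw [← F.map_comp, hc, F.map_comp, F.map_comp]
    slice_lhs 1 3 => rw [hSF1 x (𝟙_ C) (𝟙_ C)]
    slice_lhs 3 4 => rw [← hnatL x (λ_ (𝟙_ C)).hom]
    simp only [MonoidalCategory.whiskerLeft_comp, Category.assoc]
  -- the unit morphism
  obtain ⟨u, hu, -⟩ := whiskerRight_bij p q
    ((λ_ (F.obj (𝟙_ C))).hom ≫ inv (Fm (𝟙_ C) (𝟙_ C) ≫ F.map (λ_ (𝟙_ C)).hom))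
  have left1 : (u ▷ F.obj (𝟙_ C)) ≫ Fm (𝟙_ C) (𝟙_ C) ≫ F.map (λ_ (𝟙_ C)).hom =
      (λ_ (F.obj (𝟙_ C))).hom := by
    rw [hu]
    simp
  -- m ▷ e = α ≫ e ◁ m
  have hm : (Fm (𝟙_ C) (𝟙_ C) ≫ F.map (λ_ (𝟙_ C)).hom) ▷ F.obj (𝟙_ C) =
      (α_ (F.obj (𝟙_ C)) (F.obj (𝟙_ C)) (F.obj (𝟙_ C))).hom ≫
        (F.obj (𝟙_ C) ◁ (Fm (𝟙_ C) (𝟙_ C) ≫ F.map (λ_ (𝟙_ C)).hom)) := by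
    have h := assocN (𝟙_ C)
    simp only [← Category.assoc] at h
    rwa [cancel_mono, cancel_mono] at h
  -- right unit law at the unit object
  have right1 : (F.obj (𝟙_ C) ◁ u) ≫ Fm (𝟙_ C) (𝟙_ C) ≫ F.map (λ_ (𝟙_ C)).hom =
      (ρ_ (F.obj (𝟙_ C))).hom := by
    apply cancelE
    rw [comp_whiskerRight, hm, whisker_assoc]
    simp only [Category.assoc, Iso.inv_hom_id_assoc]
    rw [← MonoidalCategory.whiskerLeft_comp, left1, triangle]
  -- the left unit axiom
  have leftAx : ∀ x : C,
      (u ▷ F.obj x) ≫ Fm (𝟙_ C) x ≫ F.map (λ_ x).hom = (λ_ (F.obj x)).hom := by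
    intro x
    rw [← cancel_epi (𝟙_ G ◁ (Fm (𝟙_ C) x ≫ F.map (λ_ x).hom))]
    have h2 : (F.obj (𝟙_ C) ◁ (Fm (𝟙_ C) x ≫ F.map (λ_ x).hom)) ≫
          Fm (𝟙_ C) x ≫ F.map (λ_ x).hom =
        (α_ (F.obj (𝟙_ C)) (F.obj (𝟙_ C)) (F.obj x)).inv ≫
          ((Fm (𝟙_ C) (𝟙_ C) ≫ F.map (λ_ (𝟙_ C)).hom) ▷ F.obj x) ≫
            Fm (𝟙_ C) x ≫ F.map (λ_ x).hom := by
      rw [assocN x, Iso.inv_hom_id_assoc]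
    rw [whisker_exchange_assoc u (Fm (𝟙_ C) x ≫ F.map (λ_ x).hom), h2,
      associator_inv_naturality_left_assoc, ← comp_whiskerRight_assoc, left1,
      leftUnitor_whiskerRight]
    simp only [Category.assoc, Iso.inv_hom_id_assoc]
    rw [leftUnitor_naturality]
  -- the right unit axiom
  have rightAx : ∀ x : C,
      (F.obj x ◁ u) ≫ Fm x (𝟙_ C) ≫ F.map (ρ_ x).hom = (ρ_ (F.obj x)).hom := by
    intro x
    rw [← cancel_epi ((Fm x (𝟙_ C) ≫ F.map (ρ_ x).hom) ▷ 𝟙_ G)]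
    rw [← whisker_exchange_assoc, assocN' x, associator_naturality_right_assoc,
      ← MonoidalCategory.whiskerLeft_comp_assoc, right1, whiskerLeft_rightUnitor]
    simp only [Category.assoc, Iso.hom_inv_id_assoc]
    rw [rightUnitor_naturality]
  refine ⟨u, ⟨inferInstance, leftAx, rightAx⟩, ?_⟩
  rintro v ⟨-, hvl, -⟩
  apply cancelE
  have h1 := (hvl (𝟙_ C)).trans (leftAx (𝟙_ C)).symm
  simp only [← Category.assoc] at h1
  rwa [cancel_mono, cancel_mono] at h1
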